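/- Let G be a finite connected bipartite Eulerian graph (every vertex has even degree) with at least one edge, and let s be any vertex of G. Then Bob (the second player) has a winning strategy in the feedback game on G with starting vertex s. -/

import Mathlib

/-- `FeedbackWin st E u` : the player to move wins the feedback game with starting
vertex `st`, remaining (unused) edges `E`, and token currently on `u`.  The player
to move wins iff they can move the token along some remaining edge `{u, v}` (which
is then deleted) so that either `v` is the starting vertex `st`, or `v` is incident
with no remaining edge, or the resulting position is a loss for the opponent
(who is then the player to move).  This is a well-founded recursion on the finite
set of remaining edges. -/
def FeedbackWin {V : Type*} [DecidableEq V] (st : V) (E : Finset (Sym2 V)) (u : V) : Prop :=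
  ∃ v, ∃ _hmem : Sym2.mk u v ∈ E,
    v = st ∨ (∀ e ∈ E.erase (Sym2.mk u v), v ∉ e) ∨
      ¬ FeedbackWin st (E.erase (Sym2.mk u v)) v
termination_by E.card
decreasing_by exact Finset.card_erase_lt_of_mem _hmem

/-- Alice (the first player) has a winning strategy in the feedback game on the
finite graph `G` with starting vertex `st`. -/
def AliceWins {V : Type*} [Finite V] [DecidableEq V] (G : SimpleGraph V) (st : V) : Prop :=
  FeedbackWin st G.edgeSet.toFinite.toFinset st

/-- Bob (the second player) has a winning strategy in the feedback game on the
finite graph `G` with starting vertex `st`.  The feedback game is a finite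
two-player game without draws, so by Zermelo determinacy this is equivalent to
Alice not having a winning strategy. -/
def BobWins {V : Type*} [Finite V] [DecidableEq V] (G : SimpleGraph V) (st : V) : Prop :=
  ¬ AliceWins G st

namespace FeedbackAux

variable {V : Type*} [DecidableEq V]

def degE (E : Finset (Sym2 V)) (w : V) : ℕ := (E.filter (fun e => w ∈ e)).card

lemma one_le_degE {E : Finset (Sym2 V)} {w : V} {e : Sym2 V} (he : e ∈ E) (hw : w ∈ e) :
    1 ≤ degE E w := by
  have : e ∈ E.filter (fun e => w ∈ e) := Finset.mem_filter.2 ⟨he, hw⟩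
  exact Finset.card_pos.2 ⟨e, this⟩

lemma degE_erase_mem {E : Finset (Sym2 V)} {w : V} {e : Sym2 V} (he : e ∈ E) (hw : w ∈ e) :
    degE (E.erase e) w = degE E w - 1 := by
  unfold degE
  rw [Finset.filter_erase, Finset.card_erase_of_mem (Finset.mem_filter.2 ⟨he, hw⟩)]

lemma degE_erase_not_mem {E : Finset (Sym2 V)} {w : V} {e : Sym2 V} (hw : w ∉ e) :
    degE (E.erase e) w = degE E w := by
  unfold degE
  rw [Finset.filter_erase, Finset.erase_eq_of_notMem]
  simp [hw]

lemma exists_edge_of_odd {E : Finset (Sym2 V)} {u : V} (h : Odd (degE E u)) :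
    ∃ v, Sym2.mk u v ∈ E := by
  have hpos : 0 < degE E u := Nat.pos_of_ne_zero (by rintro h0; simp [h0] at h)
  obtain ⟨e, he⟩ := Finset.card_pos.1 hpos
  obtain ⟨heE, hue⟩ := Finset.mem_filter.1 he
  obtain ⟨v, rfl⟩ := Sym2.mem_iff_exists.1 hue
  exact ⟨v, heE⟩

lemma fin2_eq {a b c : Fin 2} (h1 : a ≠ b) (h2 : c ≠ b) : a = c := by
  fin_cases a <;> fin_cases b <;> fin_cases c <;> simp_all

/-- The main invariant lemma, by strong induction on the number of remaining edges.
Part 1: if the token is on the same colour class as `s` and the trail-parity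
invariant holds, the player to move loses.
Part 2: if the token is on the other colour class and the parity invariant holds,
the player to move wins. -/
lemma main (G : SimpleGraph V) (c : G.Coloring (Fin 2)) (s : V) :
    ∀ (n : ℕ) (E : Finset (Sym2 V)), E.card = n → (∀ e ∈ E, e ∈ G.edgeSet) → ∀ u : V,
      ((c u = c s →
        ((u = s ∧ Even (degE E s)) ∨ (u ≠ s ∧ Odd (degE E u) ∧ Odd (degE E s))) →
        (∀ w, w ≠ u → w ≠ s → Even (degE E w)) →
        ¬ FeedbackWin s E u)
      ∧
      (c u ≠ c s → Odd (degE E u) → Odd (degE E s) →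
        (∀ w, w ≠ u → w ≠ s → Even (degE E w)) →
        FeedbackWin s E u)) := by
  intro n
  induction n using Nat.strong_induction_on with
  | _ n ih =>
    intro E hcard hE u
    constructor
    · -- Part 1 : player to move loses
      intro hcol hdeg heven
      rw [FeedbackWin]
      rintro ⟨v, hmem, hor⟩
      have hadj : G.Adj u v := (G.mem_edgeSet).1 (hE _ hmem)
      have huv : u ≠ v := hadj.ne
      have hcuv : c u ≠ c v := c.valid hadj
      have hvs : v ≠ s := fun h => hcuv (by rw [hcol, h])
      have hvu : v ≠ u := huv.symm
      have hveven : Even (degE E v) := by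
        rcases hdeg with ⟨rfl, _⟩ | ⟨hus, _, _⟩
        · exact heven v hvu hvs
        · exact heven v hvu hvs
      have hvmem : v ∈ Sym2.mk u v := by simp
      have humem : u ∈ Sym2.mk u v := by simp
      have h1 : 1 ≤ degE E v := one_le_degE hmem hvmem
      set E' := E.erase (Sym2.mk u v) with hE'
      have hvodd : Odd (degE E' v) := by
        rw [degE_erase_mem hmem hvmem]
        exact Nat.Even.sub_odd h1 hveven odd_one
      -- v is not dead
      have hnotdead : ∃ e ∈ E', v ∈ e := by
        obtain ⟨w, hw⟩ := exists_edge_of_odd hvodd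
        exact ⟨_, hw, by simp⟩
      -- the resulting position is a win for the opponent
      have hE'sub : ∀ e ∈ E', e ∈ G.edgeSet := fun e he => hE e (Finset.mem_of_mem_erase he)
      have hcard' : E'.card = n - 1 := by rw [hE', Finset.card_erase_of_mem hmem, hcard]
      have hlt : n - 1 < n := by
        have : 0 < n := hcard ▸ Finset.card_pos.2 ⟨_, hmem⟩
        omega
      have hsodd : Odd (degE E' s) := by
        rcases hdeg with ⟨rfl, hse⟩ | ⟨hus, _, hso⟩
        · rw [degE_erase_mem hmem humem]
          exact Nat.Even.sub_odd (one_le_degE hmem humem) hse odd_one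
        · rw [degE_erase_not_mem (by simp [Sym2.mem_iff]; exact ⟨fun h => hus h.symm, hvs.symm⟩)]
          exact hso
      have heven' : ∀ w, w ≠ v → w ≠ s → Even (degE E' w) := by
        intro w hwv hws
        by_cases hwu : w = u
        · subst hwu
          rcases hdeg with ⟨rfl, _⟩ | ⟨hus, huo, _⟩
          · exact absurd rfl hws
          · rw [degE_erase_mem hmem humem]
            exact Nat.Odd.sub_odd huo odd_one
        · rw [degE_erase_not_mem (by simp [Sym2.mem_iff]; exact ⟨hwu, hwv⟩)]
          exact heven w hwu hws
      have hcvs : c v ≠ c s := fun h => hcuv (hcol.trans h.symm)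
      have hwin : FeedbackWin s E' v :=
        ((ih _ hlt E' hcard' hE'sub v).2) hcvs hvodd hsodd heven'
      rcases hor with h | h | h
      · exact hvs h
      · obtain ⟨e, he, hve⟩ := hnotdead; exact h e he hve
      · exact h hwin
    · -- Part 2 : player to move wins
      intro hcol huodd hsodd heven
      obtain ⟨v, hmem⟩ := exists_edge_of_odd huodd
      have hadj : G.Adj u v := (G.mem_edgeSet).1 (hE _ hmem)
      have huv : u ≠ v := hadj.ne
      have hcuv : c u ≠ c v := c.valid hadj
      have hus : u ≠ s := fun h => hcol (by rw [h])
      have hcvs : c v = c s := fin2_eq (fun h => hcuv h.symm) (fun h => hcol h.symm)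
      rw [FeedbackWin]
      by_cases hvs : v = s
      · exact ⟨v, hmem, Or.inl hvs⟩
      · refine ⟨v, hmem, Or.inr (Or.inr ?_)⟩
        have hvmem : v ∈ Sym2.mk u v := by simp
        have humem : u ∈ Sym2.mk u v := by simp
        set E' := E.erase (Sym2.mk u v) with hE'
        have hE'sub : ∀ e ∈ E', e ∈ G.edgeSet := fun e he => hE e (Finset.mem_of_mem_erase he)
        have hcard' : E'.card = n - 1 := by rw [hE', Finset.card_erase_of_mem hmem, hcard]
        have hlt : n - 1 < n := by
          have : 0 < n := hcard ▸ Finset.card_pos.2 ⟨_, hmem⟩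
          omega
        have hveven : Even (degE E v) := heven v huv.symm hvs
        have hvodd : Odd (degE E' v) := by
          rw [degE_erase_mem hmem hvmem]
          exact Nat.Even.sub_odd (one_le_degE hmem hvmem) hveven odd_one
        have hsodd' : Odd (degE E' s) := by
          rw [degE_erase_not_mem (by simp [Sym2.mem_iff]; exact ⟨fun h => hus h.symm, fun h => hvs h.symm⟩)]
          exact hsodd
        have heven' : ∀ w, w ≠ v → w ≠ s → Even (degE E' w) := by
          intro w hwv hws
          by_cases hwu : w = u
          · subst hwu
            rw [degE_erase_mem hmem humem]
            exact Nat.Odd.sub_odd huodd odd_one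
          · rw [degE_erase_not_mem (by simp [Sym2.mem_iff]; exact ⟨hwu, hwv⟩)]
            exact heven w hwu hws
        exact ((ih _ hlt E' hcard' hE'sub v).1) hcvs
          (Or.inr ⟨hvs, hvodd, hsodd'⟩) heven'

lemma degE_eq_ncard [Finite V] (G : SimpleGraph V) (w : V) :
    degE G.edgeSet.toFinite.toFinset w = (G.neighborSet w).ncard := by
  have himg : ((G.edgeSet.toFinite.toFinset.filter (fun e => w ∈ e)) : Set (Sym2 V)) =
      (fun v => Sym2.mk w v) '' G.neighborSet w := by
    ext e
    simp only [Finset.coe_filter, Set.Finite.mem_toFinset, Set.mem_setOf_eq, Set.mem_image,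
      SimpleGraph.mem_neighborSet]
    constructor
    · rintro ⟨heE, hwe⟩
      obtain ⟨v, rfl⟩ := Sym2.mem_iff_exists.1 hwe
      exact ⟨v, (G.mem_edgeSet).1 heE, rfl⟩
    · rintro ⟨v, hadj, rfl⟩
      exact ⟨(G.mem_edgeSet).2 hadj, by simp⟩
  have hinj : Set.InjOn (fun v => Sym2.mk w v) (G.neighborSet w) := by
    intro a _ b _ hab
    exact Sym2.congr_right.1 hab
  rw [degE, ← Set.ncard_coe_finset, himg, Set.ncard_image_of_injOn hinj]

end FeedbackAux

set_option linter.unusedVariables false in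
/-- Let `G` be a finite connected bipartite Eulerian graph (every
vertex has even degree) with at least one edge, and let `s` be any vertex.  Then
Bob (the second player) has a winning strategy in the feedback game on `G` with
starting vertex `s`. -/
theorem feedback_bob_wins_bipartite_eulerian {V : Type*} [Finite V] [DecidableEq V]
    (G : SimpleGraph V) (hconn : G.Connected) (hbip : G.Colorable 2)
    (heul : ∀ v : V, Even (G.neighborSet v).ncard)
    (hedge : G.edgeSet.Nonempty) (s : V) :
    BobWins G s := by
  obtain ⟨c⟩ := hbip
  intro hA
  have hE : ∀ e ∈ G.edgeSet.toFinite.toFinset, e ∈ G.edgeSet :=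
    fun e he => (Set.Finite.mem_toFinset _).1 he
  have heven : ∀ w : V, Even (FeedbackAux.degE G.edgeSet.toFinite.toFinset w) := by
    intro w; rw [FeedbackAux.degE_eq_ncard]; exact heul w
  exact (FeedbackAux.main G c s _ G.edgeSet.toFinite.toFinset rfl hE s).1 rfl
    (Or.inl ⟨rfl, heven s⟩) (fun w _ _ => heven w) hA
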